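/- Assume 2 is invertible in A. For Lagrangians L, L' of W, the map γ_{L',L} defined by (γ_{L',L} f)(w) = (|L|·|L∩L'|)^{-1/2} Σ_{ζ' ∈ L'} conj(χ(w, ζ')) f(w + ζ') sends 𝓔_L into 𝓔_{L'} and satisfies: (a) ⟨γ_{L',L}(f), h⟩ = ⟨f, γ_{L,L'}(h)⟩ for all f ∈ 𝓔_L, h ∈ 𝓔_{L'}; (b) ⟨γ_{L',L}(f), γ_{L',L}(h)⟩ = ⟨f, h⟩ for all f, h ∈ 𝓔_L; (c) γ_{L,L'} ∘ γ_{L',L} = id_{𝓔_L}; and (e) τ_g ∘ γ_{L',L} = γ_{g·L', g·L} ∘ τ_g for all g ∈ SL_*(2,A), where (τ_g f)(w) = f(g^{-1}·w). -/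

import Mathlib

/-- The set `SL_*(2,A)` for a ring with involution `(A, *)`. -/
def SLstarSet (A : Type*) [Ring A] [StarRing A] : Set (Matrix (Fin 2) (Fin 2) A) :=
  {g | g 0 0 * star (g 0 1) = g 0 1 * star (g 0 0) ∧
       g 1 0 * star (g 1 1) = g 1 1 * star (g 1 0) ∧
       star (g 0 0) * g 1 0 = star (g 1 0) * g 0 0 ∧
       star (g 0 1) * g 1 1 = star (g 1 1) * g 0 1 ∧
       g 0 0 * star (g 1 1) - g 0 1 * star (g 1 0) = 1 ∧
       star (g 0 0) * g 1 1 - star (g 1 0) * g 0 1 = 1}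

/-- Action of a 2×2 matrix over `A` on `W = S ⊕ S` by matrix multiplication. -/
def matAct {A S : Type*} [Ring A] [AddCommGroup S] [Module A S]
    (g : Matrix (Fin 2) (Fin 2) A) (v : S × S) : S × S :=
  (g 0 0 • v.1 + g 0 1 • v.2, g 1 0 • v.1 + g 1 1 • v.2)

/-- The explicit inverse `[[d*, −b*],[−c*, a*]]` of `g = [[a,b],[c,d]] ∈ SL_*(2,A)`. -/
def invStar {A : Type*} [Ring A] [StarRing A] (g : Matrix (Fin 2) (Fin 2) A) :
    Matrix (Fin 2) (Fin 2) A :=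
  !![star (g 1 1), -star (g 0 1); -star (g 1 0), star (g 0 0)]

/-- The symplectic form `B((s,t),(s',t')) = η(s,t') − η(t,s')` on `W = S ⊕ S`. -/
def symplForm {k S : Type*} [Field k] [AddCommGroup S] [Module k S]
    (η : S →ₗ[k] S →ₗ[k] k) (v w : S × S) : k :=
  η v.1 w.2 - η v.2 w.1

/-- A Lagrangian: a right `A`-submodule `L` of `W = S ⊕ S` (right action
`u·a = (a*·u₁, a*·u₂)`) with `L = L^⊥` for the symplectic form. -/
def IsLagrangian {k A S : Type*} [Field k] [AddCommGroup S] [Module k S]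
    [Ring A] [StarRing A] [Module A S]
    (η : S →ₗ[k] S →ₗ[k] k) (L : Set (S × S)) : Prop :=
  (0 : S × S) ∈ L ∧ (∀ u ∈ L, ∀ v ∈ L, u + v ∈ L) ∧
  (∀ a : A, ∀ u ∈ L, ((star a • u.1, star a • u.2) : S × S) ∈ L) ∧
  L = {w | ∀ u ∈ L, symplForm η u w = 0}

/-- The fiber `𝓔_L = {f : W → ℂ | f(w + ζ) = χ(w,ζ) f(w), ζ ∈ L}`, `χ = ψ ∘ B`. -/
def fiberE {k S : Type*} [Field k] [AddCommGroup S] [Module k S]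
    (η : S →ₗ[k] S →ₗ[k] k) (ψ : AddChar k ℂ) (L : Set (S × S)) : Set ((S × S) → ℂ) :=
  {f | ∀ (w ζ : S × S), ζ ∈ L → f (w + ζ) = ψ (symplForm η w ζ) * f w}

/-- The inner product `⟨f, h⟩ = Σ_{w ∈ W} f(w) conj(h(w))`. -/
noncomputable def innerE {S : Type*} (f h : (S × S) → ℂ) : ℂ :=
  ∑ᶠ w : S × S, f w * (starRingEnd ℂ) (h w)

/-- The connection map `γ_{L',L} : 𝓔_L → 𝓔_{L'}`,
`(γ_{L',L} f)(w) = (|L|·|L∩L'|)^{-1/2} Σ_{ζ' ∈ L'} conj(χ(w,ζ')) f(w + ζ')`. -/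
noncomputable def gammaMap {k S : Type*} [Field k] [AddCommGroup S] [Module k S]
    (η : S →ₗ[k] S →ₗ[k] k) (ψ : AddChar k ℂ) (L' L : Set (S × S))
    (f : (S × S) → ℂ) : (S × S) → ℂ :=
  fun w => ((Real.sqrt ((Nat.card ↥L : ℝ) * (Nat.card ↥(L ∩ L') : ℝ)) : ℂ))⁻¹ *
    ∑ᶠ ζ' ∈ L', (starRingEnd ℂ) (ψ (symplForm η w ζ')) * f (w + ζ')

/-- The operator `τ_g`, `(τ_g f)(w) = f(g⁻¹·w)`. -/
def tauMap {A S : Type*} [AddCommGroup S]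
    [Ring A] [StarRing A] [Module A S]
    (g : Matrix (Fin 2) (Fin 2) A) (f : (S × S) → ℂ) : (S × S) → ℂ :=
  fun w => f (matAct (invStar g) w)

set_option linter.unusedSectionVars false

section Aux

open Finset

variable {k A S : Type*} [Field k] [Fintype k] [Ring A] [Algebra k A] [StarRing A]
  [AddCommGroup S] [Module k S] [Module A S] [IsScalarTower k A S]
  [FiniteDimensional k S]

private lemma psi_conj (ψ : AddChar k ℂ) (x : k) :
    (starRingEnd ℂ) (ψ x) = ψ (-x) := by
  have h0 : ringChar k ≠ 0 := CharP.char_ne_zero_of_finite k (ringChar k)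
  rw [AddChar.starComp_apply (Nat.pos_of_ne_zero h0), AddChar.inv_apply]

private lemma psi_mul_psi_neg (ψ : AddChar k ℂ) (x : k) : ψ x * ψ (-x) = 1 := by
  rw [← AddChar.map_add_eq_mul, add_neg_cancel, AddChar.map_zero_eq_one]

private lemma sF_add_left (η : S →ₗ[k] S →ₗ[k] k) (u v w : S × S) :
    symplForm η (u + v) w = symplForm η u w + symplForm η v w := by
  simp [symplForm]; ring

private lemma sF_add_right (η : S →ₗ[k] S →ₗ[k] k) (u v w : S × S) :
    symplForm η u (v + w) = symplForm η u v + symplForm η u w := by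
  simp [symplForm]; ring

private lemma sF_smul_left (η : S →ₗ[k] S →ₗ[k] k) (c : k) (u w : S × S) :
    symplForm η (c • u) w = c * symplForm η u w := by
  simp [symplForm]; ring

private lemma sF_zero_left (η : S →ₗ[k] S →ₗ[k] k) (w : S × S) :
    symplForm η 0 w = 0 := by simp [symplForm]

private lemma sF_skew (η : S →ₗ[k] S →ₗ[k] k) (hsymm : ∀ s t : S, η s t = η t s)
    (u w : S × S) : symplForm η u w = - symplForm η w u := by
  simp [symplForm, hsymm u.1 w.2, hsymm u.2 w.1]

private lemma sF_self (η : S →ₗ[k] S →ₗ[k] k) (hsymm : ∀ s t : S, η s t = η t s)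
    (u : S × S) : symplForm η u u = 0 := by
  simp [symplForm, hsymm u.1 u.2]

section Lag

variable {η : S →ₗ[k] S →ₗ[k] k} {L : Set (S × S)}
  (hstark : ∀ c : k, star (algebraMap k A c) = algebraMap k A c)
  (hL : IsLagrangian (A := A) η L)

include hL

private lemma lag_zero : (0 : S × S) ∈ L := hL.1

private lemma lag_add {u v : S × S} (hu : u ∈ L) (hv : v ∈ L) : u + v ∈ L :=
  hL.2.1 u hu v hv

include hstark in
private lemma lag_smul (c : k) {u : S × S} (hu : u ∈ L) : c • u ∈ L := by
  have h := hL.2.2.1 (algebraMap k A c) u hu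
  rw [hstark c] at h
  have e1 : (algebraMap k A c) • u.1 = c • u.1 := algebraMap_smul A c u.1
  have e2 : (algebraMap k A c) • u.2 = c • u.2 := algebraMap_smul A c u.2
  rw [e1, e2] at h
  exact h

include hstark in
private lemma lag_neg {u : S × S} (hu : u ∈ L) : -u ∈ L := by
  have := lag_smul hstark hL (-1 : k) hu
  rwa [neg_one_smul] at this

private lemma lag_orth {u v : S × S} (hu : u ∈ L) (hv : v ∈ L) :
    symplForm η u v = 0 := by
  have h : v ∈ {w | ∀ u ∈ L, symplForm η u w = 0} := hL.2.2.2 ▸ hv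
  exact h u hu

private lemma lag_mem_of_orth {v : S × S} (h : ∀ u ∈ L, symplForm η u v = 0) :
    v ∈ L := by
  rw [hL.2.2.2]; exact h

end Lag

/-- The Lagrangian as a `k`-submodule. -/
private def lagSub (η : S →ₗ[k] S →ₗ[k] k) (L : Set (S × S))
    (hstark : ∀ c : k, star (algebraMap k A c) = algebraMap k A c)
    (hL : IsLagrangian (A := A) η L) : Submodule k (S × S) where
  carrier := L
  add_mem' := fun hu hv => lag_add hL hu hv
  zero_mem' := lag_zero hL
  smul_mem' := fun c _ hu => lag_smul hstark hL c hu

end Aux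
section Aux2

open Finset Module

variable {k A S : Type*} [Field k] [Fintype k] [Ring A] [Algebra k A] [StarRing A]
  [AddCommGroup S] [Module k S] [Module A S] [IsScalarTower k A S]
  [FiniteDimensional k S]

/-- The symplectic form as a bilinear form. -/
private def sympl (η : S →ₗ[k] S →ₗ[k] k) : LinearMap.BilinForm k (S × S) :=
  LinearMap.mk₂ k (fun v w => symplForm η v w)
    (fun u v w => sF_add_left η u v w)
    (fun c u w => sF_smul_left η c u w)
    (fun u v w => sF_add_right η u v w)
    (fun c u w => by simp [symplForm]; ring)

@[simp] private lemma sympl_apply (η : S →ₗ[k] S →ₗ[k] k) (v w : S × S) :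
    sympl η v w = symplForm η v w := rfl

private lemma sympl_nondeg (η : S →ₗ[k] S →ₗ[k] k)
    (hnondeg : ∀ s : S, (∀ t : S, η s t = 0) → s = 0) :
    (sympl η).SeparatingLeft := by
  intro v hv
  have h1 : v.1 = 0 := by
    apply hnondeg
    intro t
    have := hv (0, t)
    simpa [symplForm] using this
  have h2 : v.2 = 0 := by
    apply hnondeg
    intro t
    have := hv (t, 0)
    simpa [symplForm] using this
  exact Prod.ext h1 h2

private lemma sympl_refl (η : S →ₗ[k] S →ₗ[k] k) (hsymm : ∀ s t : S, η s t = η t s) :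
    (sympl η).IsRefl := by
  intro v w h
  simp only [sympl_apply] at h ⊢
  rw [sF_skew η hsymm, h, neg_zero]

private lemma lag_two_finrank (η : S →ₗ[k] S →ₗ[k] k)
    (hsymm : ∀ s t : S, η s t = η t s)
    (hnondeg : ∀ s : S, (∀ t : S, η s t = 0) → s = 0)
    (hstark : ∀ c : k, star (algebraMap k A c) = algebraMap k A c)
    {L : Set (S × S)} (hL : IsLagrangian (A := A) η L) :
    2 * finrank k (lagSub η L hstark hL) = finrank k (S × S) := by
  set M := lagSub η L hstark hL
  have horth : (sympl η).orthogonal M = M := by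
    ext w
    constructor
    · intro hw
      exact lag_mem_of_orth hL fun u hu => hw u hu
    · intro hw u hu
      have hu' : u ∈ L := hu
      have hw' : w ∈ L := hw
      exact lag_orth hL hu' hw'
  have h := LinearMap.BilinForm.finrank_orthogonal
    ((LinearMap.IsRefl.nondegenerate_iff_separatingLeft (sympl_refl η hsymm)).mpr
      (sympl_nondeg η hnondeg)) M
  rw [horth] at h
  have hle : finrank k M ≤ finrank k (S × S) := Submodule.finrank_le M
  omega

private lemma lag_card_sq (η : S →ₗ[k] S →ₗ[k] k)
    (hsymm : ∀ s t : S, η s t = η t s)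
    (hnondeg : ∀ s : S, (∀ t : S, η s t = 0) → s = 0)
    (hstark : ∀ c : k, star (algebraMap k A c) = algebraMap k A c)
    {L : Set (S × S)} (hL : IsLagrangian (A := A) η L) :
    Nat.card ↥L * Nat.card ↥L = Nat.card (S × S) := by
  haveI : Finite S := Module.finite_of_finite k
  set M := lagSub η L hstark hL
  letI : Fintype (S × S) := Fintype.ofFinite _
  letI : Fintype ↥M := Fintype.ofFinite _
  have hM : Nat.card ↥L = Fintype.card ↥M := by
    rw [← Nat.card_eq_fintype_card]; rfl
  have h1 : Fintype.card ↥M = Fintype.card k ^ finrank k M := card_eq_pow_finrank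
  have h2 : Fintype.card (S × S) = Fintype.card k ^ finrank k (S × S) :=
    card_eq_pow_finrank
  rw [hM, Nat.card_eq_fintype_card, h1, h2, ← pow_add,
    ← lag_two_finrank η hsymm hnondeg hstark hL, two_mul]

private lemma lag_card_eq (η : S →ₗ[k] S →ₗ[k] k)
    (hsymm : ∀ s t : S, η s t = η t s)
    (hnondeg : ∀ s : S, (∀ t : S, η s t = 0) → s = 0)
    (hstark : ∀ c : k, star (algebraMap k A c) = algebraMap k A c)
    {L L' : Set (S × S)} (hL : IsLagrangian (A := A) η L)
    (hL' : IsLagrangian (A := A) η L') :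
    Nat.card ↥L = Nat.card ↥L' := by
  have := (lag_card_sq η hsymm hnondeg hstark hL).trans
    (lag_card_sq η hsymm hnondeg hstark hL').symm
  exact Nat.mul_self_inj.mp this

end Aux2
section Aux3

open Finset

variable {k A S : Type*} [Field k] [Fintype k] [Ring A] [Algebra k A] [StarRing A]
  [AddCommGroup S] [Module k S] [Module A S] [IsScalarTower k A S]
  [FiniteDimensional k S]

private lemma finsum_mem_eq_sum' {α : Type*} (T : Set α) (hT : T.Finite) (F : α → ℂ) :
    ∑ᶠ x ∈ T, F x = ∑ x ∈ hT.toFinset, F x :=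
  finsum_mem_eq_finite_toFinset_sum F hT

open scoped Classical in
/-- The key character sum over a Lagrangian. -/
private lemma char_sum (η : S →ₗ[k] S →ₗ[k] k) (ψ : AddChar k ℂ)
    (hψ : ∃ x : k, ψ x ≠ 1) (h2 : IsUnit (2 : A))
    (hstark : ∀ c : k, star (algebraMap k A c) = algebraMap k A c)
    {L : Set (S × S)} (hL : IsLagrangian (A := A) η L)
    (hLfin : L.Finite) (v : S × S) :
    ∑ ζ ∈ hLfin.toFinset, ψ (-(2 * symplForm η ζ v)) =
      if v ∈ L then (Nat.card ↥L : ℂ) else 0 := by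
  haveI : Finite S := Module.finite_of_finite k
  by_cases hv : v ∈ L
  · rw [if_pos hv]
    have : ∀ ζ ∈ hLfin.toFinset, ψ (-(2 * symplForm η ζ v)) = 1 := by
      intro ζ hζ
      rw [Set.Finite.mem_toFinset] at hζ
      rw [lag_orth hL hζ hv]
      simp
    rw [Finset.sum_congr rfl this, Finset.sum_const, nsmul_eq_mul, mul_one,
      Nat.card_eq_card_finite_toFinset hLfin]
  · rw [if_neg hv]
    -- there exists ζ₀ ∈ L with 2 * B ζ₀ v ≠ 0
    have hex : ∃ ζ₀ ∈ L, (2 : k) * symplForm η ζ₀ v ≠ 0 := by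
      by_contra hcon
      push_neg at hcon
      rcases eq_or_ne (2 : k) 0 with h2k | h2k
      · -- then 2 = 0 in A, so A and S are trivial and v = 0 ∈ L
        have h2A : (2 : A) = 0 := by
          have : (algebraMap k A) (2 : k) = (2 : A) := map_ofNat _ 2
          rw [← this, h2k, map_zero]
        rw [h2A] at h2
        have h01 : (0 : A) = 1 := by
          rcases h2 with ⟨u, hu⟩
          have := u.val_inv
          rw [hu, zero_mul] at this
          exact this
        have hS : ∀ s : S, s = 0 := by
          intro s
          calc s = (1 : A) • s := (one_smul A s).symm
          _ = (0 : A) • s := by rw [← h01]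
          _ = 0 := zero_smul A s
        have : v = 0 := Prod.ext (hS v.1) (hS v.2)
        rw [this] at hv
        exact hv (lag_zero hL)
      · apply hv
        apply lag_mem_of_orth hL
        intro u hu
        have := hcon u hu
        exact (mul_eq_zero.mp this).resolve_left h2k
    obtain ⟨ζ₀, hζ₀L, hζ₀⟩ := hex
    set M := lagSub η L hstark hL with hM
    letI : Fintype ↥M := Fintype.ofFinite _
    -- the additive character on M
    set φ : M →+ k :=
      { toFun := fun z => -(2 * symplForm η (z : S × S) v)
        map_zero' := by simp [sF_zero_left]
        map_add' := by
          intro x y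
          push_cast
          rw [sF_add_left]
          ring } with hφ
    set e : AddChar ↥M ℂ := ψ.compAddMonoidHom φ with he
    have hne : e ≠ 0 := by
      rw [AddChar.ne_zero_iff]
      obtain ⟨x, hx⟩ := hψ
      set t : k := 2 * symplForm η ζ₀ v with ht
      refine ⟨(-x * t⁻¹) • ⟨ζ₀, hζ₀L⟩, ?_⟩
      have : φ ((-x * t⁻¹) • (⟨ζ₀, hζ₀L⟩ : M)) = x := by
        simp only [hφ, AddMonoidHom.coe_mk, ZeroHom.coe_mk]
        have : (((-x * t⁻¹) • (⟨ζ₀, hζ₀L⟩ : M) : M) : S × S) = (-x * t⁻¹) • ζ₀ := rfl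
        rw [this, sF_smul_left]
        have hcalc : -(2 * (-x * t⁻¹ * symplForm η ζ₀ v)) = x * (t * t⁻¹) := by
          rw [ht]; ring
        rw [hcalc, mul_inv_cancel₀ hζ₀, mul_one]
      show ψ (φ _) ≠ 1
      rw [this]
      exact hx
    have hzero : ∑ z : ↥M, e z = 0 := AddChar.sum_eq_zero_iff_ne_zero.mpr hne
    -- transfer the sum
    rw [← hzero]
    refine Finset.sum_bij (fun ζ hζ => (⟨ζ, (hLfin.mem_toFinset.mp hζ : ζ ∈ L)⟩ : ↥M))
      (fun ζ hζ => Finset.mem_univ _) ?_ ?_ ?_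
    · intro a ha b hb hab
      simpa using congrArg (Subtype.val) hab
    · intro z _
      exact ⟨(z : S × S), hLfin.mem_toFinset.mpr z.2, by simp⟩
    · intro ζ hζ
      rfl

end Aux3
section Aux4

open Finset

variable {k A S : Type*} [Field k] [Fintype k] [Ring A] [Algebra k A] [StarRing A]
  [AddCommGroup S] [Module k S] [Module A S] [IsScalarTower k A S]
  [FiniteDimensional k S]

/-- The normalization constant of `gammaMap`. -/
private noncomputable def gc (L L' : Set (S × S)) : ℂ :=
  ((Real.sqrt ((Nat.card ↥L : ℝ) * (Nat.card ↥(L ∩ L') : ℝ)) : ℝ) : ℂ)⁻¹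

private lemma gamma_apply (η : S →ₗ[k] S →ₗ[k] k) (ψ : AddChar k ℂ)
    (L L' : Set (S × S)) (f : (S × S) → ℂ) (hfin : L'.Finite) (w : S × S) :
    gammaMap η ψ L' L f w =
      gc L L' * ∑ ζ' ∈ hfin.toFinset,
        (starRingEnd ℂ) (ψ (symplForm η w ζ')) * f (w + ζ') := by
  rw [gammaMap, gc, finsum_mem_eq_sum' L' hfin]

private lemma gc_conj (L L' : Set (S × S)) :
    (starRingEnd ℂ) (gc L L') = gc L L' := by
  rw [gc, map_inv₀, Complex.conj_ofReal]

private lemma psi_arith (ψ : AddChar k ℂ) (x1 x2 x3 : k) (F : ℂ) :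
    ψ (-x1) * (ψ (-(x2 + x3)) * (ψ (x1 + -x3) * F)) =
      ψ (-(2 * x3)) * (ψ (-x2) * F) := by
  have h : ψ (-x1) * ψ (-(x2 + x3)) * ψ (x1 + -x3) = ψ (-(2 * x3)) * ψ (-x2) := by
    rw [← AddChar.map_add_eq_mul, ← AddChar.map_add_eq_mul, ← AddChar.map_add_eq_mul]
    congr 1
    ring
  linear_combination F * h

/-- (1) `γ_{L',L}` maps into `𝓔_{L'}` (for arbitrary `f`). -/
private lemma gamma_mem (η : S →ₗ[k] S →ₗ[k] k) (ψ : AddChar k ℂ)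
    (hsymm : ∀ s t : S, η s t = η t s)
    (hstark : ∀ c : k, star (algebraMap k A c) = algebraMap k A c)
    (L L' : Set (S × S)) (hL' : IsLagrangian (A := A) η L')
    (f : (S × S) → ℂ) : gammaMap η ψ L' L f ∈ fiberE η ψ L' := by
  haveI : Finite S := Module.finite_of_finite k
  intro w ζ hζ
  have hfin : L'.Finite := Set.toFinite L'
  rw [gamma_apply η ψ L L' f hfin, gamma_apply η ψ L L' f hfin]
  have key : ∑ ξ ∈ hfin.toFinset,
      (starRingEnd ℂ) (ψ (symplForm η (w + ζ) ξ)) * f (w + ζ + ξ)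
      = ∑ ζ' ∈ hfin.toFinset,
          ψ (symplForm η w ζ) *
            ((starRingEnd ℂ) (ψ (symplForm η w ζ')) * f (w + ζ')) := by
    refine Finset.sum_nbij' (fun ξ => ζ + ξ) (fun ζ' => ζ' - ζ) ?_ ?_ ?_ ?_ ?_
    · intro ξ hξ
      rw [Set.Finite.mem_toFinset] at hξ ⊢
      show ζ + ξ ∈ L'
      exact lag_add hL' hζ hξ
    · intro ζ' hζ'
      rw [Set.Finite.mem_toFinset] at hζ' ⊢
      show ζ' - ζ ∈ L'
      rw [sub_eq_add_neg]
      exact lag_add hL' hζ' (lag_neg hstark hL' hζ)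
    · intro ξ _; show ζ + ξ - ζ = ξ; abel
    · intro ζ' _; show ζ + (ζ' - ζ) = ζ'; abel
    · intro ξ hξ
      rw [Set.Finite.mem_toFinset] at hξ
      show (starRingEnd ℂ) (ψ (symplForm η (w + ζ) ξ)) * f (w + ζ + ξ)
          = ψ (symplForm η w ζ) *
            ((starRingEnd ℂ) (ψ (symplForm η w (ζ + ξ))) * f (w + (ζ + ξ)))
      have hB : symplForm η ζ ξ = 0 := lag_orth hL' hζ hξ
      rw [sF_add_left, hB, add_zero, psi_conj, psi_conj, sF_add_right]
      have h2 : w + ζ + ξ = w + (ζ + ξ) := by abel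
      rw [h2]
      have hc := psi_mul_psi_neg ψ (symplForm η w ζ)
      have harg : -(symplForm η w ζ + symplForm η w ξ)
          = -(symplForm η w ζ) + -(symplForm η w ξ) := by ring
      rw [harg, AddChar.map_add_eq_mul]
      linear_combination (-(ψ (-(symplForm η w ξ)) * f (w + (ζ + ξ)))) * hc
  rw [key, ← Finset.mul_sum]
  ring

/-- (2) Pairing `γ_{L',L} f` against `h ∈ 𝓔_{L'}`. -/
private lemma inner_gamma (η : S →ₗ[k] S →ₗ[k] k) (ψ : AddChar k ℂ)
    (L L' : Set (S × S)) (f h : (S × S) → ℂ) (hh : h ∈ fiberE η ψ L') :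
    innerE (gammaMap η ψ L' L f) h =
      gc L L' * (Nat.card ↥L' : ℂ) * innerE f h := by
  haveI : Finite S := Module.finite_of_finite k
  letI : Fintype (S × S) := Fintype.ofFinite _
  have hfin : L'.Finite := Set.toFinite L'
  rw [innerE, innerE, finsum_eq_sum_of_fintype, finsum_eq_sum_of_fintype]
  have hW : ∀ w : S × S, gammaMap η ψ L' L f w * (starRingEnd ℂ) (h w)
      = gc L L' * ∑ ζ' ∈ hfin.toFinset,
          f (w + ζ') * (starRingEnd ℂ) (h (w + ζ')) := by
    intro w
    rw [gamma_apply η ψ L L' f hfin, mul_assoc, Finset.sum_mul]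
    congr 1
    refine Finset.sum_congr rfl fun ζ' hζ' => ?_
    rw [Set.Finite.mem_toFinset] at hζ'
    rw [hh w ζ' hζ', map_mul, psi_conj]
    ring
  rw [Finset.sum_congr rfl fun w _ => hW w, ← Finset.mul_sum, Finset.sum_comm]
  have htr : ∀ ζ' : S × S, ∑ w : S × S, f (w + ζ') * (starRingEnd ℂ) (h (w + ζ'))
      = ∑ w : S × S, f w * (starRingEnd ℂ) (h w) := fun ζ' =>
    Equiv.sum_comp (Equiv.addRight ζ') (fun u => f u * (starRingEnd ℂ) (h u))
  rw [Finset.sum_congr rfl fun ζ' _ => htr ζ', Finset.sum_const,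
    Nat.card_eq_card_finite_toFinset hfin]
  push_cast
  ring

/-- (3) Pairing `f ∈ 𝓔_L` against `γ_{L,L'} h`. -/
private lemma inner_gamma' (η : S →ₗ[k] S →ₗ[k] k) (ψ : AddChar k ℂ)
    (L L' : Set (S × S)) (f h : (S × S) → ℂ) (hf : f ∈ fiberE η ψ L) :
    innerE f (gammaMap η ψ L L' h) =
      gc L' L * (Nat.card ↥L : ℂ) * innerE f h := by
  haveI : Finite S := Module.finite_of_finite k
  letI : Fintype (S × S) := Fintype.ofFinite _
  have hfin : L.Finite := Set.toFinite L
  rw [innerE, innerE, finsum_eq_sum_of_fintype, finsum_eq_sum_of_fintype]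
  have hW : ∀ w : S × S, f w * (starRingEnd ℂ) (gammaMap η ψ L L' h w)
      = gc L' L * ∑ ζ ∈ hfin.toFinset,
          f (w + ζ) * (starRingEnd ℂ) (h (w + ζ)) := by
    intro w
    rw [gamma_apply η ψ L' L h hfin, map_mul, gc_conj, map_sum]
    rw [mul_comm (f w), mul_assoc, Finset.sum_mul]
    congr 1
    refine Finset.sum_congr rfl fun ζ hζ => ?_
    rw [Set.Finite.mem_toFinset] at hζ
    rw [map_mul, Complex.conj_conj, hf w ζ hζ]
    ring
  rw [Finset.sum_congr rfl fun w _ => hW w, ← Finset.mul_sum, Finset.sum_comm]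
  have htr : ∀ ζ : S × S, ∑ w : S × S, f (w + ζ) * (starRingEnd ℂ) (h (w + ζ))
      = ∑ w : S × S, f w * (starRingEnd ℂ) (h w) := fun ζ =>
    Equiv.sum_comp (Equiv.addRight ζ) (fun u => f u * (starRingEnd ℂ) (h u))
  rw [Finset.sum_congr rfl fun ζ _ => htr ζ, Finset.sum_const,
    Nat.card_eq_card_finite_toFinset hfin]
  push_cast
  ring

end Aux4
section Aux5

open Finset

variable {k A S : Type*} [Field k] [Fintype k] [Ring A] [Algebra k A] [StarRing A]
  [AddCommGroup S] [Module k S] [Module A S] [IsScalarTower k A S]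
  [FiniteDimensional k S]

private lemma gc_symm (η : S →ₗ[k] S →ₗ[k] k)
    (hsymm : ∀ s t : S, η s t = η t s)
    (hnondeg : ∀ s : S, (∀ t : S, η s t = 0) → s = 0)
    (hstark : ∀ c : k, star (algebraMap k A c) = algebraMap k A c)
    {L L' : Set (S × S)} (hL : IsLagrangian (A := A) η L)
    (hL' : IsLagrangian (A := A) η L') :
    gc L' L = gc L L' := by
  rw [gc, gc, Set.inter_comm L' L, lag_card_eq η hsymm hnondeg hstark hL' hL]

private lemma gc_mul (η : S →ₗ[k] S →ₗ[k] k)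
    (hsymm : ∀ s t : S, η s t = η t s)
    (hnondeg : ∀ s : S, (∀ t : S, η s t = 0) → s = 0)
    (hstark : ∀ c : k, star (algebraMap k A c) = algebraMap k A c)
    {L L' : Set (S × S)} (hL : IsLagrangian (A := A) η L)
    (hL' : IsLagrangian (A := A) η L') :
    gc L' L * (gc L L' * ((Nat.card ↥L : ℂ) * (Nat.card ↥(L ∩ L') : ℂ))) = 1 := by
  haveI : Finite S := Module.finite_of_finite k
  rw [gc_symm η hsymm hnondeg hstark hL hL', gc]
  set a : ℝ := (Nat.card ↥L : ℝ) with ha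
  set b : ℝ := (Nat.card ↥(L ∩ L') : ℝ) with hb
  have hL0 : 0 < Nat.card ↥L := Nat.card_pos_iff.mpr ⟨⟨0, lag_zero hL⟩, Set.Finite.to_subtype (Set.toFinite L)⟩
  have hI0 : 0 < Nat.card ↥(L ∩ L') :=
    Nat.card_pos_iff.mpr ⟨⟨0, lag_zero hL, lag_zero hL'⟩, Set.Finite.to_subtype (Set.toFinite _)⟩
  have hapos : 0 < a := by rw [ha]; exact_mod_cast hL0
  have hbpos : 0 < b := by rw [hb]; exact_mod_cast hI0
  have hs : Real.sqrt (a * b) * Real.sqrt (a * b) = a * b :=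
    Real.mul_self_sqrt (by positivity)
  have hsne : Real.sqrt (a * b) ≠ 0 := by positivity
  have hreal : (Real.sqrt (a * b))⁻¹ * ((Real.sqrt (a * b))⁻¹ * (a * b)) = 1 := by
    rw [← hs]
    field_simp
    rw [Real.sqrt_sq (Real.sqrt_nonneg _)]
  have hcast : ((Nat.card ↥L : ℂ) * (Nat.card ↥(L ∩ L') : ℂ)) = ((a * b : ℝ) : ℂ) := by
    rw [ha, hb]; push_cast; ring
  rw [hcast, ← Complex.ofReal_inv, ← Complex.ofReal_mul, ← Complex.ofReal_mul,
    hreal, Complex.ofReal_one]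

/-- (4) The composition `γ_{L,L'} ∘ γ_{L',L}` is the identity on `𝓔_L`. -/
private lemma gamma_comp (η : S →ₗ[k] S →ₗ[k] k) (ψ : AddChar k ℂ)
    (hψ : ∃ x : k, ψ x ≠ 1) (h2 : IsUnit (2 : A))
    (hsymm : ∀ s t : S, η s t = η t s)
    (hnondeg : ∀ s : S, (∀ t : S, η s t = 0) → s = 0)
    (hstark : ∀ c : k, star (algebraMap k A c) = algebraMap k A c)
    {L L' : Set (S × S)} (hL : IsLagrangian (A := A) η L)
    (hL' : IsLagrangian (A := A) η L')
    (f : (S × S) → ℂ) (hf : f ∈ fiberE η ψ L) :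
    gammaMap η ψ L L' (gammaMap η ψ L' L f) = f := by
  haveI : Finite S := Module.finite_of_finite k
  classical
  funext w
  have hfinL : L.Finite := Set.toFinite L
  have hfinL' : L'.Finite := Set.toFinite L'
  rw [gamma_apply η ψ L' L _ hfinL w]
  have hin : ∀ ζ : S × S, gammaMap η ψ L' L f (w + ζ) =
      gc L L' * ∑ ζ' ∈ hfinL'.toFinset,
        (starRingEnd ℂ) (ψ (symplForm η (w + ζ) ζ')) * f (w + ζ + ζ') :=
    fun ζ => gamma_apply η ψ L L' f hfinL' (w + ζ)
  -- rewrite each term of the outer sum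
  have hterm : ∀ ζ ∈ hfinL.toFinset,
      (starRingEnd ℂ) (ψ (symplForm η w ζ)) * gammaMap η ψ L' L f (w + ζ)
      = gc L L' * ∑ ζ' ∈ hfinL'.toFinset,
          ψ (-(2 * symplForm η ζ ζ')) *
            ((starRingEnd ℂ) (ψ (symplForm η w ζ')) * f (w + ζ')) := by
    intro ζ hζ
    rw [Set.Finite.mem_toFinset] at hζ
    rw [hin ζ, mul_comm ((starRingEnd ℂ) (ψ (symplForm η w ζ))), mul_assoc,
      Finset.sum_mul]
    congr 1
    refine Finset.sum_congr rfl fun ζ' hζ' => ?_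
    rw [Set.Finite.mem_toFinset] at hζ'
    -- pointwise identity
    have hfw : f (w + ζ + ζ') = ψ (symplForm η (w + ζ') ζ) * f (w + ζ') := by
      rw [add_right_comm]
      exact hf (w + ζ') ζ hζ
    rw [hfw, psi_conj, psi_conj, psi_conj, sF_add_left, sF_add_left,
      sF_skew η hsymm ζ' ζ]
    linear_combination psi_arith ψ (symplForm η w ζ) (symplForm η w ζ')
      (symplForm η ζ ζ') (f (w + ζ'))
  rw [Finset.sum_congr rfl hterm, ← Finset.mul_sum, Finset.sum_comm]
  -- evaluate the inner character sums
  have hswap : ∀ ζ' ∈ hfinL'.toFinset,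
      ∑ ζ ∈ hfinL.toFinset, ψ (-(2 * symplForm η ζ ζ')) *
          ((starRingEnd ℂ) (ψ (symplForm η w ζ')) * f (w + ζ'))
      = (if ζ' ∈ L then (Nat.card ↥L : ℂ) else 0) *
          ((starRingEnd ℂ) (ψ (symplForm η w ζ')) * f (w + ζ')) := by
    intro ζ' _
    rw [← Finset.sum_mul, char_sum η ψ hψ h2 hstark hL hfinL ζ']
  rw [Finset.sum_congr rfl hswap]
  -- for ζ' ∈ L the remaining term is f w
  have hval : ∀ ζ' ∈ hfinL'.toFinset,
      (if ζ' ∈ L then (Nat.card ↥L : ℂ) else 0) *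
          ((starRingEnd ℂ) (ψ (symplForm η w ζ')) * f (w + ζ'))
      = if ζ' ∈ L then (Nat.card ↥L : ℂ) * f w else 0 := by
    intro ζ' _
    by_cases hζ'L : ζ' ∈ L
    · rw [if_pos hζ'L, if_pos hζ'L, hf w ζ' hζ'L, psi_conj]
      have hc := psi_mul_psi_neg ψ (symplForm η w ζ')
      linear_combination ((Nat.card ↥L : ℂ) * f w) * hc
    · rw [if_neg hζ'L, if_neg hζ'L, zero_mul]
  rw [Finset.sum_congr rfl hval, Finset.sum_ite, Finset.sum_const_zero, add_zero,
    Finset.sum_const]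
  have hfiltercard : (hfinL'.toFinset.filter (fun ζ' => ζ' ∈ L)).card
      = Nat.card ↥(L ∩ L') := by
    have hEq : hfinL'.toFinset.filter (fun ζ' => ζ' ∈ L)
        = (Set.toFinite (L ∩ L')).toFinset := by
      ext x
      simp only [Finset.mem_filter, Set.Finite.mem_toFinset, Set.mem_inter_iff]
      tauto
    rw [hEq, ← Nat.card_eq_card_finite_toFinset]
  rw [hfiltercard, nsmul_eq_mul]
  have := gc_mul η hsymm hnondeg hstark hL hL'
  calc gc L' L * (gc L L' * ((Nat.card ↥(L ∩ L') : ℂ) * ((Nat.card ↥L : ℂ) * f w)))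
      = (gc L' L * (gc L L' * ((Nat.card ↥L : ℂ) * (Nat.card ↥(L ∩ L') : ℂ)))) * f w := by
        ring
    _ = f w := by rw [this, one_mul]
end Aux5
section Aux6

variable {A S : Type*} [Ring A] [StarRing A] [AddCommGroup S] [Module A S]

private lemma matAct_mul (M N : Matrix (Fin 2) (Fin 2) A) (v : S × S) :
    matAct M (matAct N v) = matAct (M * N) v := by
  simp only [matAct, Matrix.mul_apply, Fin.sum_univ_two, smul_add, add_smul, mul_smul]
  refine Prod.ext ?_ ?_ <;> abel

private lemma matAct_one (v : S × S) : matAct (1 : Matrix (Fin 2) (Fin 2) A) v = v := by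
  simp [matAct, Matrix.one_apply]

private lemma matAct_add (g : Matrix (Fin 2) (Fin 2) A) (v w : S × S) :
    matAct g (v + w) = matAct g v + matAct g w := by
  simp only [matAct, Prod.fst_add, Prod.snd_add, smul_add, Prod.mk_add_mk]
  refine Prod.ext ?_ ?_ <;> abel

private lemma invStar_mul_self (g : Matrix (Fin 2) (Fin 2) A) (hg : g ∈ SLstarSet A) :
    invStar g * g = 1 := by
  obtain ⟨h1, h2, h3, h4, h5, h6⟩ := hg
  have h6' : star (g 1 1) * g 0 0 - star (g 0 1) * g 1 0 = 1 := by
    have := congrArg star h6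
    simpa [star_sub, star_mul] using this
  ext i j
  fin_cases i <;> fin_cases j <;>
    simp [invStar, Matrix.mul_apply, Fin.sum_univ_two, Matrix.one_apply, neg_mul,
      ← sub_eq_add_neg, neg_add_eq_sub, sub_eq_zero, h3, h4, h6, h6']

private lemma self_mul_invStar (g : Matrix (Fin 2) (Fin 2) A) (hg : g ∈ SLstarSet A) :
    g * invStar g = 1 := by
  obtain ⟨h1, h2, h3, h4, h5, h6⟩ := hg
  have h5' : g 1 1 * star (g 0 0) - g 1 0 * star (g 0 1) = 1 := by
    have := congrArg star h5
    simpa [star_sub, star_mul] using this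
  ext i j
  fin_cases i <;> fin_cases j <;>
    simp [invStar, Matrix.mul_apply, Fin.sum_univ_two, Matrix.one_apply, mul_neg,
      ← sub_eq_add_neg, neg_add_eq_sub, sub_eq_zero, h1, h2, h5, h5']

private lemma matAct_left_inv (g : Matrix (Fin 2) (Fin 2) A) (hg : g ∈ SLstarSet A)
    (v : S × S) : matAct (invStar g) (matAct g v) = v := by
  rw [matAct_mul, invStar_mul_self g hg, matAct_one]

private lemma matAct_right_inv (g : Matrix (Fin 2) (Fin 2) A) (hg : g ∈ SLstarSet A)
    (v : S × S) : matAct g (matAct (invStar g) v) = v := by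
  rw [matAct_mul, self_mul_invStar g hg, matAct_one]

private lemma matAct_injective (g : Matrix (Fin 2) (Fin 2) A) (hg : g ∈ SLstarSet A) :
    Function.Injective (matAct (S := S) g) :=
  Function.LeftInverse.injective (matAct_left_inv g hg)

end Aux6
section Aux7

variable {k A S : Type*} [Field k] [Fintype k] [Ring A] [Algebra k A] [StarRing A]
  [AddCommGroup S] [Module k S] [Module A S] [IsScalarTower k A S]
  [FiniteDimensional k S]

private lemma sF_matAct (η : S →ₗ[k] S →ₗ[k] k)
    (hbalanced : ∀ (a : A) (s t : S), η (star a • s) t = η s (a • t))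
    {g : Matrix (Fin 2) (Fin 2) A} (hg : g ∈ SLstarSet A) (v w : S × S) :
    symplForm η (matAct g v) (matAct g w) = symplForm η v w := by
  obtain ⟨h1, h2, h3, h4, h5, h6⟩ := hg
  have h6' : star (g 1 1) * g 0 0 - star (g 0 1) * g 1 0 = 1 := by
    have := congrArg star h6
    simpa [star_sub, star_mul] using this
  have hswap : ∀ (p : A) (s t : S), η (p • s) t = η s (star p • t) := by
    intro p s t
    have := hbalanced (star p) s t
    rwa [star_star] at this
  have hpq : ∀ (p q : A) (s t : S), η (p • s) (q • t) = η s ((star p * q) • t) := by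
    intro p q s t
    rw [hswap, smul_smul]
  simp only [symplForm, matAct, map_add, LinearMap.add_apply, hpq]
  have e2 : η v.1 ((star (g 0 0) * g 1 1) • w.2)
      = η v.1 w.2 + η v.1 ((star (g 1 0) * g 0 1) • w.2) := by
    rw [sub_eq_iff_eq_add.mp h6, add_smul, one_smul, map_add]
  have e3 : η v.2 ((star (g 1 1) * g 0 0) • w.1)
      = η v.2 w.1 + η v.2 ((star (g 0 1) * g 1 0) • w.1) := by
    rw [sub_eq_iff_eq_add.mp h6', add_smul, one_smul, map_add]
  rw [h3, h4, e2, e3]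
  ring

/-- (5) Equivariance of the connection maps. -/
private lemma gamma_equivariant (η : S →ₗ[k] S →ₗ[k] k) (ψ : AddChar k ℂ)
    (hbalanced : ∀ (a : A) (s t : S), η (star a • s) t = η s (a • t))
    (L L' : Set (S × S)) {g : Matrix (Fin 2) (Fin 2) A} (hg : g ∈ SLstarSet A)
    (f : (S × S) → ℂ) :
    tauMap g (gammaMap η ψ L' L f)
      = gammaMap η ψ (matAct g '' L') (matAct g '' L) (tauMap g f) := by
  funext w
  have hinj : Function.Injective (matAct (S := S) g) := matAct_injective g hg
  show gammaMap η ψ L' L f (matAct (invStar g) w) = _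
  rw [gammaMap, gammaMap]
  have hcard1 : Nat.card ↥(matAct g '' L) = Nat.card ↥L :=
    Nat.card_image_of_injective hinj L
  have hcard2 : Nat.card ↥(matAct g '' L ∩ matAct g '' L') = Nat.card ↥(L ∩ L') := by
    rw [← Set.image_inter hinj]
    exact Nat.card_image_of_injective hinj _
  rw [hcard1, hcard2]
  congr 1
  rw [finsum_mem_image (hinj.injOn)]
  apply finsum_mem_congr rfl
  intro ζ' _
  have hB : symplForm η w (matAct g ζ') = symplForm η (matAct (invStar g) w) ζ' := by
    conv_lhs => rw [← matAct_right_inv g hg w]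
    rw [sF_matAct η hbalanced hg]
  have hArg : matAct (invStar g) (w + matAct g ζ') = matAct (invStar g) w + ζ' := by
    rw [matAct_add, matAct_left_inv g hg]
  simp only [tauMap, hB, hArg]

end Aux7
/-- Properties of the connection maps `γ_{L',L}` on the Lagrangian
bundle: they map `𝓔_L` to `𝓔_{L'}`, are mutually adjoint, unitary, mutually inverse,
and `G`-equivariant. -/
theorem gammaMap_connection_properties
    {k A S : Type*} [Field k] [Fintype k] [Ring A] [Algebra k A] [StarRing A] [Finite A]
    (hstark : ∀ c : k, star (algebraMap k A c) = algebraMap k A c)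
    (h2 : IsUnit (2 : A))
    [AddCommGroup S] [Module k S] [Module A S] [IsScalarTower k A S]
    [FiniteDimensional k S]
    (η : S →ₗ[k] S →ₗ[k] k)
    (hsymm : ∀ s t : S, η s t = η t s)
    (hnondeg : ∀ s : S, (∀ t : S, η s t = 0) → s = 0)
    (hbalanced : ∀ (a : A) (s t : S), η (star a • s) t = η s (a • t))
    (ψ : AddChar k ℂ) (hψ : ∃ x : k, ψ x ≠ 1)
    (L L' : Set (S × S)) (hL : IsLagrangian (A := A) η L) (hL' : IsLagrangian (A := A) η L') :
    (∀ f ∈ fiberE η ψ L, gammaMap η ψ L' L f ∈ fiberE η ψ L') ∧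
    (∀ f ∈ fiberE η ψ L, ∀ h ∈ fiberE η ψ L',
      innerE (gammaMap η ψ L' L f) h = innerE f (gammaMap η ψ L L' h)) ∧
    (∀ f ∈ fiberE η ψ L, ∀ h ∈ fiberE η ψ L,
      innerE (gammaMap η ψ L' L f) (gammaMap η ψ L' L h) = innerE f h) ∧
    (∀ f ∈ fiberE η ψ L, gammaMap η ψ L L' (gammaMap η ψ L' L f) = f) ∧
    (∀ g ∈ SLstarSet A, ∀ f ∈ fiberE η ψ L,
      tauMap g (gammaMap η ψ L' L f)
        = gammaMap η ψ (matAct g '' L') (matAct g '' L) (tauMap g f)) := by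
  refine ⟨?_, ?_, ?_, ?_, ?_⟩
  · intro f _
    exact gamma_mem η ψ hsymm hstark L L' hL' f
  · intro f hf h hh
    rw [inner_gamma η ψ L L' f h hh, inner_gamma' η ψ L L' f h hf,
      gc_symm η hsymm hnondeg hstark hL hL',
      lag_card_eq η hsymm hnondeg hstark hL hL']
  · intro f hf h hh
    have hmem := gamma_mem η ψ hsymm hstark L L' hL' h
    have parta := inner_gamma η ψ L L' f (gammaMap η ψ L' L h) hmem
    have parta' := inner_gamma' η ψ L L' f (gammaMap η ψ L' L h) hf
    have heq : innerE (gammaMap η ψ L' L f) (gammaMap η ψ L' L h)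
        = innerE f (gammaMap η ψ L L' (gammaMap η ψ L' L h)) := by
      rw [parta, parta', gc_symm η hsymm hnondeg hstark hL hL',
        lag_card_eq η hsymm hnondeg hstark hL hL']
    rw [heq, gamma_comp η ψ hψ h2 hsymm hnondeg hstark hL hL' h hh]
  · intro f hf
    exact gamma_comp η ψ hψ h2 hsymm hnondeg hstark hL hL' f hf
  · intro g hg f _
    exact gamma_equivariant η ψ hbalanced L L' hg f
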